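/- Let I be a nonzero squarefree (radical) monomial ideal of ℂ[x_1,…,x_n] with minimal primes C_1, …, C_r. Then ⋃_{p≥1} (1/p)·Newt(I^{(p)}) = Newt(C_1) ∩ … ∩ Newt(C_r), where I^{(p)} denotes the p-th symbolic power of I. -/

import Mathlib

open Ideal MvPolynomial Pointwise

namespace ELS

/-- Contraction of the localized ideal `J·R_S` under `R → R_S` (the `S`-saturation of `J`). -/
noncomputable def satIdeal {R : Type*} [CommRing R] (S : Submonoid R) (J : Ideal R) : Ideal R :=
  (J.map (algebraMap R (Localization S))).comap (algebraMap R (Localization S))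

/-- The complement of a prime ideal, as a submonoid. -/
def primeComplSub {R : Type*} [CommRing R] (P : Ideal R) (hP : P.IsPrime) : Submonoid R :=
  haveI := hP
  P.primeCompl

/-- The symbolic power of a prime ideal: contraction of `P^p R_P` under `R → R_P`. -/
noncomputable def primeSymbolicPower {R : Type*} [CommRing R] (P : Ideal R) (hP : P.IsPrime)
    (p : ℕ) : Ideal R :=
  satIdeal (primeComplSub P hP) (P ^ p)

/-- The multiplicative set of elements lying outside every minimal prime of `I`. -/
def outMinPrimes {R : Type*} [CommRing R] (I : Ideal R) : Submonoid R where
  carrier := {s | ∀ Q ∈ I.minimalPrimes, s ∉ Q}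
  one_mem' := by
    intro Q hQ h1
    exact hQ.1.1.ne_top ((Ideal.eq_top_iff_one Q).mpr h1)
  mul_mem' := by
    intro a b ha hb Q hQ hab
    rcases hQ.1.1.mem_or_mem hab with h | h
    · exact ha Q hQ h
    · exact hb Q hQ h

/-- The symbolic power of an ideal: contraction of `I^p` localized at the complement of the
union of the minimal primes of `I`. -/
noncomputable def symbolicPower {R : Type*} [CommRing R] (I : Ideal R) (p : ℕ) : Ideal R :=
  satIdeal (outMinPrimes I) (I ^ p)

/-- A monomial ideal: with every polynomial it contains all monomials in its support. -/
def IsMonomialIdeal {n : ℕ} (a : Ideal (MvPolynomial (Fin n) ℂ)) : Prop :=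
  ∀ f ∈ a, ∀ v ∈ f.support, (monomial v (1 : ℂ)) ∈ a

/-- The set of exponent vectors of monomials in `a`, viewed inside `ℝ^n`. -/
def monomSet {n : ℕ} (a : Ideal (MvPolynomial (Fin n) ℂ)) : Set (Fin n → ℝ) :=
  {x | ∃ v : Fin n →₀ ℕ, (monomial v (1 : ℂ)) ∈ a ∧ x = fun i => (v i : ℝ)}

/-- The Newton polyhedron of a monomial ideal: the convex hull in `ℝ^n` of the
exponent vectors of the monomials in `a`. -/
def newt {n : ℕ} (a : Ideal (MvPolynomial (Fin n) ℂ)) : Set (Fin n → ℝ) :=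
  convexHull ℝ (monomSet a)

/-- The least total degree of a nonzero polynomial in `J`: the multiplicity at the origin. -/
noncomputable def mult0 {n : ℕ} (J : Ideal (MvPolynomial (Fin n) ℂ)) : ℕ :=
  sInf {d | ∃ f ∈ J, f ≠ 0 ∧ f.totalDegree = d}

end ELS

namespace ELSAux

variable {n : ℕ}

abbrev R (n : ℕ) := MvPolynomial (Fin n) ℂ





noncomputable def ν {n : ℕ} (v : Fin n →₀ ℕ) : Fin n → ℝ := fun i => (v i : ℝ)

lemma ν_add (v u : Fin n →₀ ℕ) : ν (v + u) = ν v + ν u := by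
  funext i; simp [ν]

/-- Translation of the hull of an upward closed lattice set by a lattice vector. -/
lemma hull_translate {M₀ : Set (Fin n →₀ ℕ)} (hM₀ : ∀ v ∈ M₀, ∀ u, v + u ∈ M₀)
    {z : Fin n → ℝ} (hz : z ∈ convexHull ℝ (ν '' M₀)) (u : Fin n →₀ ℕ) :
    z + ν u ∈ convexHull ℝ (ν '' M₀) := by
  have h1 : z + ν u ∈ convexHull ℝ (ν '' M₀) + convexHull ℝ {ν u} :=
    Set.add_mem_add hz (by simp)
  rw [← convexHull_add] at h1
  refine convexHull_mono ?_ h1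
  rintro w hw
  rcases Set.mem_add.mp hw with ⟨a, ha, b, hb, rfl⟩
  rcases ha with ⟨v, hv, rfl⟩
  rcases hb with rfl
  exact ⟨v + u, hM₀ v hv u, (ν_add v u).symm ▸ rfl⟩

/-- one-coordinate upward move -/
lemma hull_up_coord {M₀ : Set (Fin n →₀ ℕ)} (hM₀ : ∀ v ∈ M₀, ∀ u, v + u ∈ M₀)
    {z : Fin n → ℝ} (hz : z ∈ convexHull ℝ (ν '' M₀)) (i : Fin n) {c : ℝ} (hc : 0 ≤ c) :
    (z + fun k => if k = i then c else 0) ∈ convexHull ℝ (ν '' M₀) := by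
  set m : ℕ := ⌊c⌋₊ with hm
  set s : ℝ := c - m with hs
  have hs0 : 0 ≤ s := by
    have := Nat.floor_le hc
    simp [hs, hm]; linarith
  have hs1 : s ≤ 1 := by
    have := (Nat.lt_floor_add_one c).le
    simp [hs, hm]; linarith
  have h1 : z + ν (Finsupp.single i m) ∈ convexHull ℝ (ν '' M₀) := hull_translate hM₀ hz _
  have h2 : z + ν (Finsupp.single i (m + 1)) ∈ convexHull ℝ (ν '' M₀) := hull_translate hM₀ hz _
  have hconv := convex_convexHull ℝ (ν '' M₀)
  have := hconv h1 h2 (by linarith : (0:ℝ) ≤ 1 - s) hs0 (by ring)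
  convert this using 1
  funext k
  by_cases hk : k = i
  · subst hk
    simp only [ν, Finsupp.single_apply, if_pos rfl, Pi.add_apply, Pi.smul_apply, smul_eq_mul]
    push_cast
    rw [hs]; ring
  · have : i ≠ k := fun h => hk h.symm
    simp only [ν, Finsupp.single_apply, if_neg this, Pi.add_apply, Pi.smul_apply, smul_eq_mul,
      if_neg hk]
    push_cast
    ring

/-- The convex hull of (the real points of) an upward closed lattice set is upward closed. -/
lemma hull_upward {M₀ : Set (Fin n →₀ ℕ)} (hM₀ : ∀ v ∈ M₀, ∀ u, v + u ∈ M₀)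
    {z : Fin n → ℝ} (hz : z ∈ convexHull ℝ (ν '' M₀)) {d : Fin n → ℝ} (hd : ∀ i, 0 ≤ d i) :
    z + d ∈ convexHull ℝ (ν '' M₀) := by
  have key : ∀ F : Finset (Fin n), (z + fun k => if k ∈ F then d k else 0) ∈
      convexHull ℝ (ν '' M₀) := by
    intro F
    induction F using Finset.induction with
    | empty =>
        have : (z + fun k => if k ∈ (∅ : Finset (Fin n)) then d k else 0) = z := by
          funext k; simp
        rw [this]; exact hz
    | @insert i F hi IH =>
        have := hull_up_coord hM₀ IH i (hd i)
        convert this using 1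
        funext k
        by_cases hk : k = i
        · subst hk; simp [hi]
        · simp [hk, Finset.mem_insert]
  have := key Finset.univ
  simpa using this



/-- L1: half-space description of single constraint lattice hull. -/
lemma mem_hull_single {S : Finset (Fin n)} {y : Fin n → ℝ}
    (h0 : ∀ i, 0 ≤ y i) (h1 : 1 ≤ ∑ i ∈ S, y i) :
    y ∈ convexHull ℝ (ν '' {v : Fin n →₀ ℕ | 0 < ∑ i ∈ S, v i}) := by
  set M₀ : Set (Fin n →₀ ℕ) := {v | 0 < ∑ i ∈ S, v i} with hM₀def
  have hM₀ : ∀ v ∈ M₀, ∀ u, v + u ∈ M₀ := by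
    intro v hv u
    simp only [hM₀def, Set.mem_setOf_eq, Finsupp.add_apply, Finset.sum_add_distrib] at *
    omega
  set t : ℝ := ∑ i ∈ S, y i with ht
  have ht0 : 0 < t := lt_of_lt_of_le one_pos h1
  -- center of mass of unit vectors
  set c : Fin n → ℝ := S.centerMass (fun i => y i) (fun i => ν (Finsupp.single i 1)) with hc
  have hcmem : c ∈ convexHull ℝ (ν '' M₀) := by
    refine Finset.centerMass_mem_convexHull S (fun i _ => h0 i) (ht ▸ ht0) ?_
    intro i hi
    refine ⟨Finsupp.single i 1, ?_, rfl⟩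
    simp only [hM₀def, Set.mem_setOf_eq, Finsupp.single_apply]
    rw [Finset.sum_ite_eq S i (fun _ => 1)]
    simp [hi]
  have hck : ∀ k, c k = t⁻¹ * (if k ∈ S then y k else 0) := by
    intro k
    rw [hc, Finset.centerMass]
    simp only [Pi.smul_apply, smul_eq_mul, ← ht]
    rw [Finset.sum_apply]
    congr 1
    rw [← Finset.sum_ite_eq' S k (fun k => y k)]
    refine Finset.sum_congr rfl ?_
    intro i _
    simp only [Pi.smul_apply, smul_eq_mul, ν, Finsupp.single_apply]
    by_cases h : i = k <;> simp [h]
  have hd : ∀ k, 0 ≤ y k - c k := by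
    intro k
    rw [hck k]
    by_cases h : k ∈ S
    · simp only [if_pos h]
      have : t⁻¹ ≤ 1 := by
        rw [inv_le_one_iff₀]; right; linarith
      nlinarith [h0 k]
    · simp [if_neg h, h0 k]
  have := hull_upward hM₀ hcmem hd
  convert this using 1
  funext k; simp



/-- KL': every real point of the covering polyhedron is a convex combination of rational
points of it. -/
lemma rat_hull {r : ℕ} (S : Fin r → Finset (Fin n)) :
    ∀ (m : ℕ) (x : Fin n → ℝ),
      Module.finrank ℚ (Submodule.span ℚ (insert (1:ℝ) (Set.range x))) ≤ m →
      (∀ i, 0 ≤ x i) → (∀ j, 1 ≤ ∑ i ∈ S j, x i) →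
      x ∈ convexHull ℝ {q : Fin n → ℝ | (∀ i, ∃ a : ℚ, q i = (a : ℝ)) ∧ (∀ i, 0 ≤ q i) ∧
        ∀ j, 1 ≤ ∑ i ∈ S j, q i} := by
  intro m
  induction m using Nat.strong_induction_on with
  | _ m IH =>
  intro x hrank h0 h1
  by_cases hQ : ∀ i, ∃ a : ℚ, x i = (a : ℝ)
  · exact subset_convexHull ℝ _ ⟨hQ, h0, h1⟩
  push_neg at hQ
  obtain ⟨i₀, hi₀⟩ := hQ
  have hnm : x i₀ ∉ Submodule.span ℚ ({(1:ℝ)} : Set ℝ) := by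
    intro h
    rw [Submodule.mem_span_singleton] at h
    obtain ⟨a, ha⟩ := h
    exact hi₀ a (by rw [← ha, Rat.smul_def, mul_one])
  obtain ⟨φ, hφx, hφmap⟩ := Submodule.exists_dual_map_eq_bot_of_notMem hnm inferInstance
  have hφ1 : φ 1 = 0 := by
    have h1m : φ 1 ∈ Submodule.map φ (Submodule.span ℚ ({(1:ℝ)} : Set ℝ)) :=
      Submodule.mem_map_of_mem (Submodule.mem_span_singleton_self 1)
    rw [hφmap] at h1m
    simpa using h1m
  set d : Fin n → ℚ := fun i => φ (x i) with hd
  set ξ : ℝ := (φ (x i₀))⁻¹ • x i₀ with hξ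
  have hφξ : φ ξ = 1 := by
    rw [hξ, map_smul, smul_eq_mul, inv_mul_cancel₀ hφx]
  set D : Fin n → ℝ := fun i => ((d i : ℚ) : ℝ) with hD
  set y : ℝ → Fin n → ℝ := fun t i => x i + (t - ξ) * D i with hy
  -- basic facts
  have fact1 : ∀ i, d i ≠ 0 → 0 < x i := by
    intro i hdi
    rcases lt_or_eq_of_le (h0 i) with h | h
    · exact h
    · exfalso; apply hdi; rw [hd]; simp only [← h, map_zero]
  have fact2 : ∀ j, (∑ i ∈ S j, d i) ≠ 0 → 1 < ∑ i ∈ S j, x i := by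
    intro j hsj
    rcases lt_or_eq_of_le (h1 j) with h | h
    · exact h
    · exfalso; apply hsj
      have : φ (∑ i ∈ S j, x i) = ∑ i ∈ S j, d i := by
        rw [map_sum]
      rw [← this, ← h, hφ1]
  -- eventually in the polyhedron
  have hev : ∀ᶠ t in nhds ξ, (∀ i, 0 ≤ y t i) ∧ (∀ j, 1 ≤ ∑ i ∈ S j, y t i) := by
    apply Filter.Eventually.and
    · rw [Filter.eventually_all]
      intro i
      by_cases hdi : d i = 0
      · apply Filter.Eventually.of_forall
        intro t
        simp only [hy, hD, hdi]
        push_cast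
        simpa using h0 i
      · have hc : ContinuousAt (fun t => x i + (t - ξ) * D i) ξ := by fun_prop
        have hvi : (0:ℝ) < x i + (ξ - ξ) * D i := by simpa using fact1 i hdi
        have := hc.eventually_mem (IsOpen.mem_nhds isOpen_Ioi hvi)
        filter_upwards [this] with t ht
        exact le_of_lt ht
    · rw [Filter.eventually_all]
      intro j
      by_cases hsj : (∑ i ∈ S j, d i) = 0
      · apply Filter.Eventually.of_forall
        intro t
        have : ∑ i ∈ S j, y t i = ∑ i ∈ S j, x i := by
          simp only [hy, Finset.sum_add_distrib, ← Finset.mul_sum]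
          have : ∑ i ∈ S j, D i = 0 := by
            simp only [hD, ← Rat.cast_sum, hsj, Rat.cast_zero]
          rw [this, mul_zero, add_zero]
        rw [this]; exact h1 j
      · have hc : ContinuousAt (fun t => ∑ i ∈ S j, (x i + (t - ξ) * D i)) ξ := by fun_prop
        have hvj : (1:ℝ) < ∑ i ∈ S j, (x i + (ξ - ξ) * D i) := by
          simpa using fact2 j hsj
        have := hc.eventually_mem (IsOpen.mem_nhds isOpen_Ioi hvj)
        filter_upwards [this] with t ht
        exact le_of_lt ht
  rw [Metric.eventually_nhds_iff] at hev
  obtain ⟨δ, hδ0, hδ⟩ := hev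
  obtain ⟨tm, htm1, htm2⟩ := exists_rat_btwn (show ξ - δ < ξ by linarith)
  obtain ⟨tp, htp1, htp2⟩ := exists_rat_btwn (show ξ < ξ + δ by linarith)
  have hym := hδ (show dist ((tm:ℝ)) ξ < δ by
    rw [Real.dist_eq, abs_sub_lt_iff]; constructor <;> linarith)
  have hyp := hδ (show dist ((tp:ℝ)) ξ < δ by
    rw [Real.dist_eq, abs_sub_lt_iff]; constructor <;> linarith)
  -- algebraic form of curve points at rational times
  have hz_eq : ∀ (t : ℚ) (i : Fin n), y (t:ℝ) i = x i + (t * d i) • (1:ℝ) - (d i) • ξ := by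
    intro t i
    simp only [hy, hD, Rat.smul_def, mul_one]
    push_cast
    ring
  have hφz : ∀ (t : ℚ) (i : Fin n), φ (y (t:ℝ) i) = 0 := by
    intro t i
    rw [hz_eq, map_sub, map_add, map_smul, map_smul, hφ1, hφξ]
    simp [hd]
  -- membership in spans
  set W : Submodule ℚ ℝ := Submodule.span ℚ (insert (1:ℝ) (Set.range x)) with hW
  have h1W : (1:ℝ) ∈ W := Submodule.subset_span (Set.mem_insert _ _)
  have hxW : ∀ i, x i ∈ W := fun i =>
    Submodule.subset_span (Set.mem_insert_of_mem _ (Set.mem_range_self i))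
  have hξW : ξ ∈ W := Submodule.smul_mem _ _ (hxW i₀)
  have hzW : ∀ (t : ℚ) (i : Fin n), y (t:ℝ) i ∈ W := by
    intro t i
    rw [hz_eq]
    exact sub_mem (add_mem (hxW i) (Submodule.smul_mem _ _ h1W)) (Submodule.smul_mem _ _ hξW)
  haveI hWfd : FiniteDimensional ℚ W :=
    FiniteDimensional.span_of_finite ℚ ((Set.finite_range x).insert 1)
  have hlt : W ⊓ LinearMap.ker φ < W := by
    refine lt_of_le_of_ne inf_le_left ?_
    intro hEq
    have : x i₀ ∈ W ⊓ LinearMap.ker φ := by rw [hEq]; exact hxW i₀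
    exact hφx this.2
  have hrankdrop : ∀ (t : ℚ),
      Module.finrank ℚ (Submodule.span ℚ (insert (1:ℝ) (Set.range (y (t:ℝ))))) < m := by
    intro t
    have hle : Submodule.span ℚ (insert (1:ℝ) (Set.range (y (t:ℝ)))) ≤ W ⊓ LinearMap.ker φ := by
      rw [Submodule.span_le]
      rintro w (rfl | ⟨i, rfl⟩)
      · exact ⟨h1W, hφ1⟩
      · exact ⟨hzW t i, hφz t i⟩
    haveI : FiniteDimensional ℚ ↥(W ⊓ LinearMap.ker φ) :=
      Submodule.finiteDimensional_of_le inf_le_left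
    calc Module.finrank ℚ (Submodule.span ℚ (insert (1:ℝ) (Set.range (y (t:ℝ)))))
        ≤ Module.finrank ℚ ↥(W ⊓ LinearMap.ker φ) := Submodule.finrank_mono hle
      _ < Module.finrank ℚ W := Submodule.finrank_lt_finrank_of_lt hlt
      _ ≤ m := hrank
  -- apply the induction hypothesis to both endpoints
  have hmem_m := IH _ (hrankdrop tm) (y (tm:ℝ)) le_rfl hym.1 hym.2
  have hmem_p := IH _ (hrankdrop tp) (y (tp:ℝ)) le_rfl hyp.1 hyp.2
  -- convex combination
  have htmp : (tm:ℝ) < (tp:ℝ) := lt_trans htm2 htp1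
  set lam : ℝ := ((tp:ℝ) - ξ) / ((tp:ℝ) - (tm:ℝ)) with hlam
  have hden : (0:ℝ) < (tp:ℝ) - (tm:ℝ) := by linarith
  have hlam0 : 0 ≤ lam := div_nonneg (by linarith) (le_of_lt hden)
  have hlam1 : 0 ≤ 1 - lam := by
    have : lam ≤ 1 := by rw [hlam, div_le_one hden]; linarith
    linarith
  have hne : ((tp:ℝ) - (tm:ℝ)) ≠ 0 := ne_of_gt hden
  have hcomb : lam • y (tm:ℝ) + (1 - lam) • y (tp:ℝ) = x := by
    funext i
    show lam * (x i + ((tm:ℝ) - ξ) * D i) + (1 - lam) * (x i + ((tp:ℝ) - ξ) * D i) = x i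
    rw [hlam]
    field_simp
    ring
  have := (convex_convexHull ℝ _) hmem_m hmem_p hlam0 hlam1 (by ring)
  rw [hcomb] at this
  exact this





/-- the "τ" functional: total degree in the variables of S -/
def τ (S : Finset (Fin n)) (v : Fin n →₀ ℕ) : ℕ := ∑ i ∈ S, v i

lemma τ_add (S : Finset (Fin n)) (v u : Fin n →₀ ℕ) : τ S (v + u) = τ S v + τ S u := by
  simp [τ, Finset.sum_add_distrib]

/-- ideal generated by the variables in S -/
noncomputable def vspan (S : Finset (Fin n)) : Ideal (R n) :=
  Ideal.span ((fun i => (X i : R n)) '' (S : Set (Fin n)))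

noncomputable def killφ (S : Finset (Fin n)) : R n →ₐ[ℂ] R n :=
  aeval (fun i => if i ∈ S then 0 else X i)

lemma killφ_monomial (S : Finset (Fin n)) (v : Fin n →₀ ℕ) (c : ℂ) :
    killφ S (monomial v c) = if τ S v = 0 then monomial v c else 0 := by
  classical
  rw [killφ, aeval_monomial]
  by_cases h : τ S v = 0
  · rw [if_pos h]
    have hv : ∀ i ∈ v.support, (if i ∈ S then (0 : R n) else X i) ^ v i = (X i) ^ v i := by
      intro i hi
      have hvi : v i ≠ 0 := Finsupp.mem_support_iff.mp hi
      have his : i ∉ S := by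
        intro hiS
        have : v i ≤ τ S v := Finset.single_le_sum (fun _ _ => Nat.zero_le _) hiS
        omega
      rw [if_neg his]
    rw [Finsupp.prod_congr hv]
    rw [monomial_eq]
    congr 1
  · rw [if_neg h]
    have : ∃ i ∈ S, v i ≠ 0 := by
      by_contra hc
      push_neg at hc
      exact h (Finset.sum_eq_zero hc)
    obtain ⟨i, hiS, hvi⟩ := this
    have hmem : i ∈ v.support := Finsupp.mem_support_iff.mpr hvi
    have : (v.prod fun i e => (if i ∈ S then (0 : R n) else X i) ^ e) = 0 := by
      rw [Finsupp.prod]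
      apply Finset.prod_eq_zero hmem
      rw [if_pos hiS, zero_pow hvi]
    rw [this, mul_zero]

lemma mono_mem_vspan_of_touch (S : Finset (Fin n)) (v : Fin n →₀ ℕ) (c : ℂ)
    (h : τ S v ≠ 0) : monomial v c ∈ vspan S := by
  have : ∃ i ∈ S, v i ≠ 0 := by
    by_contra hc
    push_neg at hc
    exact h (Finset.sum_eq_zero hc)
  obtain ⟨i, hiS, hvi⟩ := this
  have hX : (X i : R n) ∈ vspan S := Ideal.subset_span ⟨i, by simpa using hiS, rfl⟩
  have hle : Finsupp.single i 1 ≤ v :=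
    Finsupp.single_le_iff.mpr (Nat.one_le_iff_ne_zero.mpr hvi)
  have hvsplit : Finsupp.single i 1 + (v - Finsupp.single i 1) = v := add_tsub_cancel_of_le hle
  have : monomial v c = X i * monomial (v - Finsupp.single i 1) c := by
    rw [X, monomial_mul, one_mul, hvsplit]
  rw [this]
  exact Ideal.mul_mem_right _ _ hX

lemma killφ_vanish (S : Finset (Fin n)) {f : R n} (hf : f ∈ vspan S) : killφ S f = 0 := by
  have : vspan S ≤ RingHom.ker (killφ S : R n →+* R n) := by
    rw [vspan, Ideal.span_le]
    rintro g ⟨i, hi, rfl⟩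
    simp only [SetLike.mem_coe, RingHom.mem_ker]
    show killφ S (X i) = 0
    rw [killφ, aeval_X, if_pos (by simpa using hi)]
  exact this hf

lemma sub_killφ_mem (S : Finset (Fin n)) (f : R n) : f - killφ S f ∈ vspan S := by
  have heq : f - killφ S f
      = ∑ v ∈ f.support, (monomial v (coeff v f) - killφ S (monomial v (coeff v f))) := by
    rw [Finset.sum_sub_distrib, ← map_sum, support_sum_monomial_coeff]
  rw [heq]
  apply Ideal.sum_mem
  intro v hv
  rw [killφ_monomial]
  by_cases h : τ S v = 0
  · rw [if_pos h, sub_self]; exact Ideal.zero_mem _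
  · rw [if_neg h, sub_zero]
    exact mono_mem_vspan_of_touch S v _ h

lemma mem_vspan_iff (S : Finset (Fin n)) (f : R n) :
    f ∈ vspan S ↔ ∀ v ∈ f.support, τ S v ≠ 0 := by
  constructor
  · intro hf v hv hτ
    have h0 := killφ_vanish S hf
    -- coefficient of v in killφ f equals coeff of v in f
    have hcoeff : coeff v (killφ S f) = coeff v f := by
      have h1 : killφ S f = ∑ u ∈ f.support, killφ S (monomial u (coeff u f)) := by
        rw [← map_sum, support_sum_monomial_coeff]
      rw [h1]
      rw [Finset.sum_congr rfl (fun u _ => killφ_monomial S u (coeff u f))]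
      -- compute coefficient
      rw [coeff_sum]
      rw [Finset.sum_eq_single v]
      · rw [if_pos hτ, coeff_monomial, if_pos rfl]
      · intro u hu huv
        by_cases h : τ S u = 0
        · rw [if_pos h, coeff_monomial, if_neg huv]
        · rw [if_neg h, coeff_zero]
      · intro h
        exact absurd hv h
    rw [h0, coeff_zero] at hcoeff
    exact (Finsupp.mem_support_iff.mp hv) hcoeff.symm
  · intro h
    nth_rewrite 1 [f.as_sum]
    apply Ideal.sum_mem
    intro v hv
    exact mono_mem_vspan_of_touch S v _ (h v hv)

lemma killφ_ne_zero_of_not_mem (S : Finset (Fin n)) {f : R n} (hf : f ∉ vspan S) :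
    killφ S f ≠ 0 := by
  intro h0
  apply hf
  have := sub_killφ_mem S f
  rw [h0, sub_zero] at this
  exact this

lemma vspan_prime (S : Finset (Fin n)) : (vspan S).IsPrime := by
  constructor
  · intro htop
    have : (1 : R n) ∈ vspan S := htop ▸ Submodule.mem_top
    rw [mem_vspan_iff] at this
    have h1 : (0 : Fin n →₀ ℕ) ∈ (1 : R n).support := by
      rw [MvPolynomial.mem_support_iff]
      simp
    exact this 0 h1 (by simp [τ])
  · intro f g hfg
    by_contra hc
    push_neg at hc
    obtain ⟨hf, hg⟩ := hc
    have h1 := killφ_ne_zero_of_not_mem S hf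
    have h2 := killφ_ne_zero_of_not_mem S hg
    have h3 : killφ S (f * g) = 0 := killφ_vanish S hfg
    rw [_root_.map_mul] at h3
    exact (mul_ne_zero h1 h2) h3



/-- If a prime contains a monomial, it contains one of its variables. -/
lemma exists_X_mem_of_mono_mem {P : Ideal (R n)} (hP : P.IsPrime) {v : Fin n →₀ ℕ}
    (hv : (monomial v (1:ℂ)) ∈ P) : ∃ i, v i ≠ 0 ∧ X i ∈ P := by
  classical
  have hmono : (monomial v (1:ℂ)) = ∏ i ∈ v.support, (X i : R n) ^ v i := by
    rw [monomial_eq, map_one, one_mul, Finsupp.prod]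
  rw [hmono, Finset.prod_eq_multiset_prod] at hv
  rw [hP.multiset_prod_mem_iff_exists_mem] at hv
  obtain ⟨p, hp, hpP⟩ := hv
  rw [Multiset.mem_map] at hp
  obtain ⟨i, hi, rfl⟩ := hp
  exact ⟨i, Finsupp.mem_support_iff.mp (by simpa using hi),
    hP.mem_of_pow_mem _ hpP⟩

/-- every minimal prime of a monomial ideal is generated by a nonempty set of variables -/
lemma minimalPrime_eq_vspan {I : Ideal (R n)} (hI0 : I ≠ ⊥)
    (hmono : ∀ f ∈ I, ∀ v ∈ f.support, (monomial v (1 : ℂ)) ∈ I)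
    {P : Ideal (R n)} (hP : P ∈ I.minimalPrimes) :
    ∃ S : Finset (Fin n), S.Nonempty ∧ P = vspan S := by
  classical
  obtain ⟨⟨hPp, hIP⟩, hPmin⟩ := hP
  set S : Finset (Fin n) := Finset.univ.filter (fun i => X i ∈ P) with hS
  have hvsub : vspan S ≤ P := by
    rw [vspan, Ideal.span_le]
    rintro g ⟨i, hi, rfl⟩
    have : i ∈ S := by simpa using hi
    rw [hS, Finset.mem_filter] at this
    exact this.2
  -- every nonzero monomial of P has a variable in S
  have key : ∀ v : Fin n →₀ ℕ, (monomial v (1:ℂ)) ∈ P → τ S v ≠ 0 := by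
    intro v hv
    obtain ⟨i, hvi, hXi⟩ := exists_X_mem_of_mono_mem hPp hv
    have hiS : i ∈ S := by rw [hS, Finset.mem_filter]; exact ⟨Finset.mem_univ i, hXi⟩
    intro hτ
    rw [τ, Finset.sum_eq_zero_iff] at hτ
    exact hvi (hτ i hiS)
  have hIS : I ≤ vspan S := by
    intro f hf
    rw [mem_vspan_iff]
    intro v hv
    exact key v (hIP (hmono f hf v hv))
  have hle : P ≤ vspan S := hPmin ⟨vspan_prime S, hIS⟩ hvsub
  refine ⟨S, ?_, le_antisymm hle hvsub⟩
  -- nonempty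
  obtain ⟨f, hfI, hf0⟩ := Submodule.exists_mem_ne_zero_of_ne_bot hI0
  obtain ⟨v, hv⟩ : ∃ v, v ∈ f.support := by
    by_contra hc
    push_neg at hc
    apply hf0
    rw [← MvPolynomial.support_eq_empty]
    exact Finset.eq_empty_iff_forall_notMem.mpr hc
  have hmem : (monomial v (1:ℂ)) ∈ P := hIP (hmono f hfI v hv)
  obtain ⟨i, hvi, hXi⟩ := exists_X_mem_of_mono_mem hPp hmem
  exact ⟨i, by rw [hS, Finset.mem_filter]; exact ⟨Finset.mem_univ i, hXi⟩⟩


lemma mono_mem_vspan_iff (S : Finset (Fin n)) (v : Fin n →₀ ℕ) :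
    (monomial v (1:ℂ)) ∈ vspan S ↔ τ S v ≠ 0 := by
  constructor
  · intro h
    have := (mem_vspan_iff S _).mp h v ?_
    · exact this
    · rw [MvPolynomial.mem_support_iff, coeff_monomial, if_pos rfl]
      exact one_ne_zero
  · intro h; exact mono_mem_vspan_of_touch S v 1 h

lemma pow_supp {I : Ideal (R n)} {T : Finset (Fin n)}
    (hT : ∀ g ∈ I, ∀ u ∈ g.support, τ T u ≠ 0) :
    ∀ p : ℕ, ∀ f ∈ I ^ p, ∀ z ∈ f.support, p ≤ τ T z := by
  classical
  intro p
  induction p with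
  | zero => intro f _ z _; exact Nat.zero_le _
  | succ p IH =>
    intro f hf
    rw [pow_succ] at hf
    refine Submodule.mul_induction_on hf ?_ ?_
    · intro g hg h hh z hz
      have hmem := MvPolynomial.support_mul g h hz
      rw [Finset.mem_add] at hmem
      obtain ⟨u, hu, w, hw, rfl⟩ := hmem
      have h1 := IH g hg u hu
      have h2 := hT h hh w hw
      rw [τ_add]
      omega
    · intro a b ha hb z hz
      rcases Finset.mem_union.mp (MvPolynomial.support_add hz) with h | h
      · exact ha z h
      · exact hb z h

lemma τ_single (T : Finset (Fin n)) (i : Fin n) (hiT : i ∈ T) :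
    τ T (Finsupp.single i 1) = 1 := by
  rw [τ]
  rw [show (∑ k ∈ T, (Finsupp.single i 1) k) = ∑ k ∈ T, if i = k then 1 else 0 from
    Finset.sum_congr rfl (fun k _ => by rw [Finsupp.single_apply])]
  rw [Finset.sum_ite_eq T i (fun _ => 1), if_pos hiT]

lemma dec {T : Finset (Fin n)} {p : ℕ} (hp : 1 ≤ p) :
    ∀ v : Fin n →₀ ℕ, p ≤ τ T v →
      ∃ d : Fin p → (Fin n →₀ ℕ), (∑ c, d c) = v ∧ ∀ c, τ T (d c) ≠ 0 := by
  induction p, hp using Nat.le_induction with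
  | base =>
    intro v hv
    exact ⟨fun _ => v, by simp, fun _ => by show τ T v ≠ 0; omega⟩
  | succ p hp IH =>
    intro v hv
    have hex : ∃ i ∈ T, v i ≠ 0 := by
      by_contra hc; push_neg at hc
      have : τ T v = 0 := Finset.sum_eq_zero hc
      omega
    obtain ⟨i, hiT, hvi⟩ := hex
    have hle : Finsupp.single i 1 ≤ v := Finsupp.single_le_iff.mpr (by omega)
    have hsplit : (v - Finsupp.single i 1) + Finsupp.single i 1 = v := tsub_add_cancel_of_le hle
    have hτv' : p ≤ τ T (v - Finsupp.single i 1) := by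
      have h2 := τ_add T (v - Finsupp.single i 1) (Finsupp.single i 1)
      rw [hsplit, τ_single T i hiT] at h2
      omega
    obtain ⟨d', hsum, hne⟩ := IH _ hτv'
    refine ⟨Fin.snoc d' (Finsupp.single i 1), ?_, ?_⟩
    · rw [Fin.sum_univ_castSucc]
      simp only [Fin.snoc_castSucc, Fin.snoc_last]
      rw [hsum, hsplit]
    · intro c
      refine Fin.lastCases ?_ ?_ c
      · simp only [Fin.snoc_last]
        rw [τ_single T i hiT]; omega
      · intro c'
        simp only [Fin.snoc_castSucc]
        exact hne c'

lemma mono_prod {κ : Type*} (s : Finset κ) (d : κ → (Fin n →₀ ℕ)) :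
    (∏ c ∈ s, (monomial (d c) (1:ℂ) : R n)) = monomial (∑ c ∈ s, d c) 1 := by
  classical
  induction s using Finset.induction with
  | empty => simp
  | insert c s hc IH =>
    rw [Finset.prod_insert hc, Finset.sum_insert hc, IH, monomial_mul, one_mul]

lemma prod_mem_pow {A : Type*} [CommRing A] (I : Ideal A) (p : ℕ) (f : Fin p → A)
    (hf : ∀ c, f c ∈ I) : (∏ c, f c) ∈ I ^ p := by
  induction p with
  | zero => simp [Ideal.one_eq_top]
  | succ p IH =>
    rw [Fin.prod_univ_castSucc, pow_succ]
    exact Ideal.mul_mem_mul (IH _ (fun c => hf c.castSucc)) (hf (Fin.last p))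

lemma mem_symbolicPower_iff (I : Ideal (R n)) (hne : (0 : R n) ∉ ELS.outMinPrimes I)
    (p : ℕ) (f : R n) :
    f ∈ ELS.symbolicPower I p ↔ ∃ s ∈ ELS.outMinPrimes I, s * f ∈ I ^ p := by
  set M := ELS.outMinPrimes I with hM
  have hMle : M ≤ nonZeroDivisors (R n) := fun s hs =>
    mem_nonZeroDivisors_of_ne_zero (fun h0 => hne (h0 ▸ hs))
  constructor
  · intro hf
    have hf' : algebraMap (R n) (Localization M) f ∈ (I ^ p).map (algebraMap _ _) := hf
    rw [IsLocalization.mem_map_algebraMap_iff M] at hf'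
    obtain ⟨⟨a, s⟩, h⟩ := hf'
    refine ⟨(s : R n), s.2, ?_⟩
    have heq : algebraMap (R n) (Localization M) ((s : R n) * f)
        = algebraMap (R n) (Localization M) (a : R n) := by
      rw [_root_.map_mul, mul_comm]; exact h
    have := IsLocalization.injective (Localization M) hMle heq
    rw [this]; exact a.2
  · rintro ⟨s, hs, hsf⟩
    have hgoal : f ∈ ELS.symbolicPower I p ↔ algebraMap (R n) (Localization M) f ∈
        (I ^ p).map (algebraMap (R n) (Localization M)) := Iff.rfl
    rw [hgoal]
    have h1 : algebraMap (R n) (Localization M) (s * f) ∈ (I ^ p).map (algebraMap _ _) :=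
      Ideal.mem_map_of_mem _ hsf
    rw [_root_.map_mul] at h1
    obtain ⟨u, hu⟩ := IsLocalization.map_units (Localization M) (⟨s, hs⟩ : M)
    rw [← hu] at h1
    have h2 := Ideal.mul_mem_left _ ((u⁻¹ : (Localization M)ˣ) : Localization M) h1
    rwa [← mul_assoc, Units.inv_mul, one_mul] at h2

/-- indicator (with value 1) of the complement of S -/
noncomputable def χc (S : Finset (Fin n)) : Fin n →₀ ℕ :=
  ∑ i ∈ Finset.univ \ S, Finsupp.single i 1

lemma χc_apply (S : Finset (Fin n)) (k : Fin n) :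
    χc S k = if k ∈ S then 0 else 1 := by
  rw [χc, Finsupp.finset_sum_apply]
  rw [show (∑ i ∈ Finset.univ \ S, (Finsupp.single i 1) k)
      = ∑ i ∈ Finset.univ \ S, if i = k then 1 else 0 from
    Finset.sum_congr rfl (fun i _ => by rw [Finsupp.single_apply])]
  rw [Finset.sum_ite_eq' (Finset.univ \ S) k (fun _ => 1)]
  by_cases hk : k ∈ S <;> simp [hk]

lemma τ_χc_self (S : Finset (Fin n)) : τ S (χc S) = 0 := by
  apply Finset.sum_eq_zero
  intro i hi
  rw [χc_apply, if_pos hi]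

/-- The key characterization: a monomial lies in the p-th symbolic power iff all the
S j degrees are at least p. -/
lemma mono_mem_symb_iff {r : ℕ} (I : Ideal (R n)) (hrad : I.IsRadical)
    (C : Fin r → Ideal (R n)) (hmin : I.minimalPrimes = Set.range C)
    (S : Fin r → Finset (Fin n)) (hCS : ∀ j, C j = vspan (S j))
    (hne0 : (0 : R n) ∉ ELS.outMinPrimes I)
    {p : ℕ} (hp : 1 ≤ p) (v : Fin n →₀ ℕ) :
    (monomial v (1:ℂ)) ∈ ELS.symbolicPower I p ↔ ∀ j, p ≤ τ (S j) v := by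
  classical
  have hCmem : ∀ j, C j ∈ I.minimalPrimes := fun j => hmin ▸ Set.mem_range_self j
  have hIC : ∀ j, I ≤ C j := fun j => (hCmem j).1.2
  constructor
  · intro hmem
    obtain ⟨s, hs, hsv⟩ := (mem_symbolicPower_iff I hne0 p _).mp hmem
    intro j
    have hsC : s ∉ C j := hs (C j) (hCmem j)
    rw [hCS j, mem_vspan_iff] at hsC
    push_neg at hsC
    obtain ⟨u, hu, hτu⟩ := hsC
    have hz : u + v ∈ (s * monomial v (1:ℂ)).support := by
      rw [MvPolynomial.mem_support_iff, coeff_mul_monomial, mul_one]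
      exact MvPolynomial.mem_support_iff.mp hu
    have hT : ∀ g ∈ I, ∀ w ∈ g.support, τ (S j) w ≠ 0 := by
      intro g hg w hw
      have : g ∈ vspan (S j) := (hCS j) ▸ hIC j hg
      exact (mem_vspan_iff _ _).mp this w hw
    have := pow_supp hT p _ hsv _ hz
    rw [τ_add] at this
    omega
  · intro hτ
    rw [mem_symbolicPower_iff I hne0 p]
    refine ⟨∑ j : Fin r, monomial (p • χc (S j)) (1:ℂ), ?_, ?_⟩
    · -- s avoids all minimal primes
      intro Q hQ hmemQ
      rw [hmin] at hQ
      obtain ⟨j, rfl⟩ := hQ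
      rw [hCS j, mem_vspan_iff] at hmemQ
      have hsup : p • χc (S j) ∈ (∑ j' : Fin r, monomial (p • χc (S j')) (1:ℂ)).support := by
        rw [MvPolynomial.mem_support_iff]
        rw [show coeff (p • χc (S j)) (∑ j' : Fin r, monomial (p • χc (S j')) (1:ℂ))
            = ∑ j' : Fin r, if p • χc (S j') = p • χc (S j) then (1:ℂ) else 0 by
          rw [coeff_sum]
          exact Finset.sum_congr rfl (fun j' _ => by rw [coeff_monomial])]
        rw [Finset.sum_boole]
        have hjmem : j ∈ Finset.univ.filter (fun j' => p • χc (S j') = p • χc (S j)) := by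
          simp
        intro hc
        rw [Nat.cast_eq_zero, Finset.card_eq_zero] at hc
        rw [hc] at hjmem
        exact absurd hjmem (Finset.notMem_empty j)
      have := hmemQ _ hsup
      apply this
      rw [show τ (S j) (p • χc (S j)) = ∑ i ∈ S j, p * (χc (S j)) i from
        Finset.sum_congr rfl (fun i _ => by rw [Finsupp.smul_apply, smul_eq_mul])]
      rw [← Finset.mul_sum]
      rw [show (∑ i ∈ S j, (χc (S j)) i) = τ (S j) (χc (S j)) from rfl, τ_χc_self, mul_zero]
    · -- s * monomial v 1 ∈ I ^ p
      rw [Finset.sum_mul]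
      apply Ideal.sum_mem
      intro j _
      rw [monomial_mul, one_mul]
      -- decompose
      obtain ⟨d, hdsum, hdne⟩ := dec hp v (hτ j)
      have hw : ∀ c : Fin p, (monomial (χc (S j) + d c) (1:ℂ)) ∈ I := by
        intro c
        have hrad' : I.radical = I := hrad.radical
        rw [← hrad', ← Ideal.sInf_minimalPrimes]
        rw [Submodule.mem_sInf]
        intro Q hQ
        rw [hmin] at hQ
        obtain ⟨j', rfl⟩ := hQ
        by_cases hcase : ∃ i ∈ S j', i ∉ S j
        · obtain ⟨i, hij', hij⟩ := hcase
          rw [hCS j']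
          apply mono_mem_vspan_of_touch
          intro hzero
          rw [τ_add] at hzero
          have h1 : τ (S j') (χc (S j)) = 0 := by omega
          rw [τ] at h1
          rw [Finset.sum_eq_zero_iff] at h1
          have := h1 i hij'
          rw [χc_apply, if_neg hij] at this
          exact one_ne_zero this
        · -- S j' ⊆ S j, hence C j ≤ C j'
          push_neg at hcase
          have hle : C j' ≤ C j := by
            rw [hCS j', hCS j, vspan, vspan]
            apply Ideal.span_mono
            apply Set.image_mono
            intro i hi
            exact hcase i hi
          have hgeq : C j ≤ C j' := (hCmem j).2 ⟨(hCmem j').1.1, hIC j'⟩ hle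
          apply hgeq
          rw [hCS j]
          apply mono_mem_vspan_of_touch
          intro hzero
          rw [τ_add] at hzero
          exact hdne c (by omega)
      have hprod := prod_mem_pow I p (fun c => monomial (χc (S j) + d c) (1:ℂ)) hw
      rw [mono_prod] at hprod
      have hsum2 : (∑ c : Fin p, (χc (S j) + d c)) = p • χc (S j) + v := by
        rw [Finset.sum_add_distrib, hdsum, Finset.sum_const]
        simp
      rw [hsum2] at hprod
      exact hprod

lemma half_convex (T : Finset (Fin n)) (a : ℝ) :
    Convex ℝ {x : Fin n → ℝ | (∀ i, 0 ≤ x i) ∧ a ≤ ∑ i ∈ T, x i} := by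
  intro x hx y hy α β hα hβ hαβ
  constructor
  · intro i
    have h1 := hx.1 i
    have h2 := hy.1 i
    have h3 : (α • x + β • y) i = α * x i + β * y i := rfl
    rw [h3]
    nlinarith
  · have h3 : ∑ i ∈ T, (α • x + β • y) i = α * (∑ i ∈ T, x i) + β * (∑ i ∈ T, y i) := by
      rw [Finset.mul_sum, Finset.mul_sum, ← Finset.sum_add_distrib]
      exact Finset.sum_congr rfl (fun i _ => rfl)
    rw [h3]
    have h4 := mul_le_mul_of_nonneg_left hx.2 hα
    have h5 := mul_le_mul_of_nonneg_left hy.2 hβ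
    have h6 : α * a + β * a = a := by rw [← add_mul, hαβ, one_mul]
    linarith

end ELSAux

/-- for a nonzero squarefree (radical) monomial ideal `I` with minimal primes
`C_1, …, C_r`, `⋃_{p≥1} (1/p)·Newt(I^{(p)}) = Newt(C_1) ∩ … ∩ Newt(C_r)`. -/
theorem stmt13 {n r : ℕ} (hr : 1 ≤ r) (I : Ideal (MvPolynomial (Fin n) ℂ)) (hI0 : I ≠ ⊥)
    (hmonoI : ELS.IsMonomialIdeal I) (hrad : I.IsRadical)
    (C : Fin r → Ideal (MvPolynomial (Fin n) ℂ))
    (hmin : I.minimalPrimes = Set.range C) :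
    (⋃ p : ℕ, ⋃ _ : 1 ≤ p, ((p : ℝ)⁻¹) • ELS.newt (ELS.symbolicPower I p)) =
      ⋂ i, ELS.newt (C i) := by
  classical
  have hCmem : ∀ j, C j ∈ I.minimalPrimes := fun j => hmin ▸ Set.mem_range_self j
  have hstruct : ∀ j, ∃ T : Finset (Fin n), T.Nonempty ∧ C j = ELSAux.vspan T := fun j =>
    ELSAux.minimalPrime_eq_vspan hI0 hmonoI (hCmem j)
  choose S hSne hCS using hstruct
  have hne0 : (0 : MvPolynomial (Fin n) ℂ) ∉ ELS.outMinPrimes I := fun h =>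
    h (C ⟨0, hr⟩) (hCmem ⟨0, hr⟩) (Submodule.zero_mem _)
  -- description of `monomSet (C j)`
  have hmsC : ∀ j, ELS.monomSet (C j)
      = ELSAux.ν '' {v : Fin n →₀ ℕ | 0 < ∑ i ∈ S j, v i} := by
    intro j
    ext x
    constructor
    · rintro ⟨v, hv, rfl⟩
      refine ⟨v, ?_, rfl⟩
      have h1 := (ELSAux.mono_mem_vspan_iff (S j) v).mp ((hCS j) ▸ hv)
      have h2 : ELSAux.τ (S j) v = ∑ i ∈ S j, v i := rfl
      simp only [Set.mem_setOf_eq]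
      omega
    · rintro ⟨v, hv, rfl⟩
      refine ⟨v, ?_, rfl⟩
      rw [hCS j]
      refine (ELSAux.mono_mem_vspan_iff (S j) v).mpr ?_
      simp only [Set.mem_setOf_eq] at hv
      have h2 : ELSAux.τ (S j) v = ∑ i ∈ S j, v i := rfl
      omega
  -- newt (C j) inside its halfspace description
  have hhalf : ∀ j, ELS.newt (C j) ⊆ {x : Fin n → ℝ | (∀ i, 0 ≤ x i) ∧ 1 ≤ ∑ i ∈ S j, x i} := by
    intro j
    rw [ELS.newt]
    refine convexHull_min ?_ (ELSAux.half_convex (S j) 1)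
    rw [hmsC j]
    rintro z ⟨v, hv, rfl⟩
    simp only [Set.mem_setOf_eq] at hv
    constructor
    · intro i
      simp [ELSAux.ν]
    · have hcast : ∑ i ∈ S j, ELSAux.ν v i = ((∑ i ∈ S j, v i : ℕ) : ℝ) := by
        rw [Nat.cast_sum]
        rfl
      rw [hcast]
      exact_mod_cast hv
  -- ... and the converse inclusion
  have hhalf2 : ∀ j, {x : Fin n → ℝ | (∀ i, 0 ≤ x i) ∧ 1 ≤ ∑ i ∈ S j, x i}
      ⊆ ELS.newt (C j) := by
    intro j x hx
    have := ELSAux.mem_hull_single hx.1 hx.2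
    rw [ELS.newt, hmsC j]
    exact this
  apply Set.Subset.antisymm
  · -- ⊆ : forward inclusion
    intro x hx
    simp only [Set.mem_iUnion] at hx
    obtain ⟨p, hp, hx⟩ := hx
    have hpR : (0:ℝ) < p := by exact_mod_cast Nat.lt_of_lt_of_le Nat.zero_lt_one hp
    rw [Set.mem_iInter]
    intro j
    obtain ⟨y, hy, rfl⟩ := hx
    have hsub : ELS.monomSet (ELS.symbolicPower I p) ⊆
        {z : Fin n → ℝ | (∀ i, 0 ≤ z i) ∧ (p:ℝ) ≤ ∑ i ∈ S j, z i} := by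
      rintro z ⟨v, hv, rfl⟩
      have hτ := ((ELSAux.mono_mem_symb_iff I hrad C hmin S hCS hne0 hp v).mp hv) j
      constructor
      · intro i; exact Nat.cast_nonneg _
      · have hcast : (∑ i ∈ S j, ((v i : ℕ):ℝ)) = ((∑ i ∈ S j, v i : ℕ) : ℝ) := by
          rw [Nat.cast_sum]
        show (p:ℝ) ≤ ∑ i ∈ S j, ((v i : ℕ):ℝ)
        rw [hcast]
        exact_mod_cast hτ
    have hyH := convexHull_min hsub (ELSAux.half_convex (S j) (p:ℝ)) hy
    apply hhalf2 j
    constructor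
    · intro i
      show 0 ≤ (p:ℝ)⁻¹ * y i
      exact mul_nonneg (inv_nonneg.mpr hpR.le) (hyH.1 i)
    · have hsum : ∑ i ∈ S j, ((p:ℝ)⁻¹ • y) i = (p:ℝ)⁻¹ * ∑ i ∈ S j, y i := by
        rw [Finset.mul_sum]
        exact Finset.sum_congr rfl (fun i _ => rfl)
      rw [hsum]
      have h2 := mul_le_mul_of_nonneg_left hyH.2 (inv_nonneg.mpr hpR.le)
      rwa [inv_mul_cancel₀ (ne_of_gt hpR)] at h2
  · -- ⊇ : reverse inclusion
    intro x hx
    rw [Set.mem_iInter] at hx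
    have hx0 : ∀ i, 0 ≤ x i := (hhalf ⟨0, hr⟩ (hx ⟨0, hr⟩)).1
    have hx1 : ∀ j, 1 ≤ ∑ i ∈ S j, x i := fun j => (hhalf j (hx j)).2
    have hrh := ELSAux.rat_hull S _ x le_rfl hx0 hx1
    rw [convexHull_eq] at hrh
    obtain ⟨ι, t, w, z, hw0, hw1, hz, hcm⟩ := hrh
    -- rational coordinates
    have hqex : ∀ k : ι, ∃ q : Fin n → ℚ, k ∈ t → (∀ i, z k i = (q i : ℝ)) := by
      intro k
      by_cases hk : k ∈ t
      · choose a ha using (hz k hk).1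
        exact ⟨a, fun _ => ha⟩
      · exact ⟨0, fun h => absurd h hk⟩
    choose q hq using hqex
    set D : ℕ := ∏ k ∈ t, ∏ i : Fin n, (q k i).den with hD
    have hDpos : 0 < D := Finset.prod_pos (fun k _ => Finset.prod_pos (fun i _ => (q k i).pos))
    have hD1 : 1 ≤ D := hDpos
    have hDR : (0:ℝ) < D := by exact_mod_cast hDpos
    -- integer points
    have hvex : ∀ k : ι, ∃ v : Fin n →₀ ℕ, k ∈ t → ∀ i, (D:ℝ) * z k i = ((v i : ℕ) : ℝ) := by
      intro k
      by_cases hk : k ∈ t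
      · have hmm : ∀ i, ∃ m : ℕ, (D:ℚ) * q k i = (m:ℚ) := by
          intro i
          have hd : (q k i).den ∣ D := by
            refine dvd_trans ?_ (Finset.dvd_prod_of_mem _ hk)
            exact Finset.dvd_prod_of_mem _ (Finset.mem_univ i)
          have hnn : 0 ≤ q k i := by
            have h5 := (hz k hk).2.1 i
            rw [hq k hk i] at h5
            exact_mod_cast h5
          obtain ⟨e, he⟩ := hd
          refine ⟨(q k i).num.toNat * e, ?_⟩
          have hden0 : ((q k i).den : ℚ) ≠ 0 := by
            exact_mod_cast (q k i).den_nz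
          have h0 := Rat.num_div_den (q k i)
          rw [div_eq_iff hden0] at h0
          have h1 : ((q k i).den : ℚ) * (q k i) = ((q k i).num : ℚ) := by
            rw [mul_comm]; exact h0.symm
          have h2 : (((q k i).num.toNat : ℕ) : ℚ) = ((q k i).num : ℚ) := by
            exact_mod_cast congrArg (fun z : ℤ => (z : ℚ))
              (Int.toNat_of_nonneg (Rat.num_nonneg.mpr hnn))
          push_cast [he]
          push_cast at h2
          linear_combination (e : ℚ) * h1 - (e : ℚ) * h2
        choose m hm using hmm
        refine ⟨Finsupp.equivFunOnFinite.symm m, fun _ => ?_⟩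
        intro i
        rw [hq k hk i]
        have h3 : ((D:ℚ) * q k i : ℚ) = ((m i : ℕ) : ℚ) := hm i
        have h4 : (D:ℝ) * ((q k i : ℚ) : ℝ) = ((m i : ℕ) : ℝ) := by
          exact_mod_cast congrArg (Rat.cast (K := ℝ)) h3
        rw [h4]
        rfl
      · exact ⟨0, fun h => absurd h hk⟩
    choose v hv using hvex
    -- scaled points lie in the monomial set of the D-th symbolic power
    have hptmem : ∀ k ∈ t, ((D:ℝ) • z k) ∈ ELS.monomSet (ELS.symbolicPower I D) := by
      intro k hk
      refine ⟨v k, ?_, ?_⟩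
      · rw [ELSAux.mono_mem_symb_iff I hrad C hmin S hCS hne0 hD1]
        intro j
        have hsumz : (1:ℝ) ≤ ∑ i ∈ S j, z k i := (hz k hk).2.2 j
        have hsumv : (D:ℝ) ≤ ∑ i ∈ S j, (((v k) i : ℕ) : ℝ) := by
          have h6 : ∑ i ∈ S j, (((v k) i : ℕ) : ℝ) = ∑ i ∈ S j, (D:ℝ) * z k i :=
            Finset.sum_congr rfl (fun i _ => (hv k hk i).symm)
          rw [h6, ← Finset.mul_sum]
          nlinarith
        have hcast : (∑ i ∈ S j, (((v k) i : ℕ):ℝ)) = ((ELSAux.τ (S j) (v k) : ℕ) : ℝ) := by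
          rw [ELSAux.τ, Nat.cast_sum]
        rw [hcast] at hsumv
        exact_mod_cast hsumv
      · funext i
        exact hv k hk i
    -- center of mass computation
    have hDx : (D:ℝ) • x ∈ ELS.newt (ELS.symbolicPower I D) := by
      rw [ELS.newt, ← hcm]
      have hsm : (D:ℝ) • t.centerMass w z = t.centerMass w (fun k => (D:ℝ) • z k) := by
        rw [Finset.centerMass, Finset.centerMass, smul_comm, Finset.smul_sum]
        congr 1
        refine Finset.sum_congr rfl (fun k _ => ?_)
        rw [smul_comm]
      rw [hsm]
      exact Finset.centerMass_mem_convexHull t hw0 (by rw [hw1]; exact one_pos)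
        (fun k hk => hptmem k hk)
    rw [Set.mem_iUnion]
    refine ⟨D, Set.mem_iUnion.mpr ⟨hD1, ?_⟩⟩
    rw [Set.mem_smul_set]
    exact ⟨(D:ℝ) • x, hDx, by rw [smul_smul, inv_mul_cancel₀ (ne_of_gt hDR), one_smul]⟩
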